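/- The log-generalized-robustness D_max(ρ) = log(1 + R_G(ρ)) is subadditive under tensor products when the free set is closed under tensor products: D_max(ρ⊗ρ') ≤ D_max(ρ) + D_max(ρ'). -/

import Mathlib

open Matrix
open scoped ComplexOrder Kronecker

/-- A density matrix: positive semidefinite with unit trace. -/
def IsDensity {n : Type*} [Fintype n] (ρ : Matrix n n ℂ) : Prop :=
  ρ.PosSemidef ∧ ρ.trace = 1

/-- The feasible set for the generalized robustness of `ρ` with respect to the free set `F`. -/
def RGset {n : Type*} [Fintype n] (F : Set (Matrix n n ℂ)) (ρ : Matrix n n ℂ) : Set ℝ :=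
  {l : ℝ | 0 ≤ l ∧ ∃ τ : Matrix n n ℂ, IsDensity τ ∧
    ((1 / (1 + l) : ℝ) • ρ + (l / (1 + l) : ℝ) • τ) ∈ F}

/-- Generalized robustness `R_G(ρ) = inf{λ ≥ 0 : ∃ density τ, (ρ + λτ)/(1+λ) ∈ F}`. -/
noncomputable def RG {n : Type*} [Fintype n] (F : Set (Matrix n n ℂ)) (ρ : Matrix n n ℂ) : ℝ :=
  sInf (RGset F ρ)

/-- Log generalized robustness `D_max(ρ) = log₂(1 + R_G(ρ))`. -/
noncomputable def DmaxR {n : Type*} [Fintype n] (F : Set (Matrix n n ℂ))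
    (ρ : Matrix n n ℂ) : ℝ :=
  Real.logb 2 (1 + RG F ρ)

lemma kron_conjTranspose {n m : Type*} [Fintype n] [Fintype m]
    (A : Matrix n n ℂ) (B : Matrix m m ℂ) : (A ⊗ₖ B)ᴴ = Aᴴ ⊗ₖ Bᴴ := by
  ext ⟨i, j⟩ ⟨k, l⟩
  simp [conjTranspose_apply, kroneckerMap_apply, star_mul']

lemma posSemidef_real_smul {n : Type*} [Fintype n] {A : Matrix n n ℂ}
    (hA : A.PosSemidef) {r : ℝ} (hr : 0 ≤ r) : (r • A).PosSemidef := by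
  refine posSemidef_iff_dotProduct_mulVec.mpr ⟨?_, ?_⟩
  · rw [IsHermitian, conjTranspose_smul, hA.1]
    norm_num
  · intro x
    rw [smul_mulVec, dotProduct_smul, RCLike.real_smul_eq_coe_mul]
    exact mul_nonneg (by positivity) (hA.dotProduct_mulVec_nonneg x)

lemma posSemidef_kron {n m : Type*} [Fintype n] [Fintype m] [DecidableEq n] [DecidableEq m]
    {A : Matrix n n ℂ} {B : Matrix m m ℂ}
    (hA : A.PosSemidef) (hB : B.PosSemidef) : (A ⊗ₖ B).PosSemidef := by
  exact hA.kronecker hB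

lemma isDensity_kron {n m : Type*} [Fintype n] [Fintype m] [DecidableEq n] [DecidableEq m]
    {A : Matrix n n ℂ} {B : Matrix m m ℂ}
    (hA : IsDensity A) (hB : IsDensity B) : IsDensity (A ⊗ₖ B) :=
  ⟨posSemidef_kron hA.1 hB.1, by rw [trace_kronecker, hA.2, hB.2, one_mul]⟩

/-- subadditivity of `D_max` under tensor products, when the free sets are
closed under tensor products and the robustness infima of `ρ` and `ρ'` are attained. -/
theorem Dmax_subadditive {nA nB : Type*} [Fintype nA] [DecidableEq nA] [Fintype nB]
    [DecidableEq nB]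
    (FA : Set (Matrix nA nA ℂ)) (FB : Set (Matrix nB nB ℂ))
    (FAB : Set (Matrix (nA × nB) (nA × nB) ℂ))
    (hFAcc : IsClosed FA ∧ Convex ℝ FA) (hFBcc : IsClosed FB ∧ Convex ℝ FB)
    (hFABcc : IsClosed FAB ∧ Convex ℝ FAB)
    (htensor : ∀ σ ∈ FA, ∀ σ' ∈ FB, σ ⊗ₖ σ' ∈ FAB)
    (ρ : Matrix nA nA ℂ) (ρ' : Matrix nB nB ℂ) (hρ : IsDensity ρ) (hρ' : IsDensity ρ')
    (hatt : RG FA ρ ∈ RGset FA ρ) (hatt' : RG FB ρ' ∈ RGset FB ρ') :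
    DmaxR FAB (ρ ⊗ₖ ρ') ≤ DmaxR FA ρ + DmaxR FB ρ' := by
  obtain ⟨hl0, τ, hτ, hσ⟩ := hatt
  obtain ⟨hl'0, τ', hτ', hσ'⟩ := hatt'
  set l := RG FA ρ with hldef
  set l' := RG FB ρ' with hl'def
  have h1l : (0:ℝ) < 1 + l := by linarith
  have h1l' : (0:ℝ) < 1 + l' := by linarith
  set μ := l + l' + l * l' with hμdef
  have hμ0 : 0 ≤ μ := by positivity
  have h1μ : (0:ℝ) < 1 + μ := by linarith
  -- the feasible witness
  have hμmem : μ ∈ RGset FAB (ρ ⊗ₖ ρ') := by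
    refine ⟨hμ0, ?_⟩
    rcases eq_or_lt_of_le hμ0 with heq | hpos
    · -- μ = 0, so l = l' = 0 and ρ, ρ' are themselves free
      have hll' : 0 ≤ l * l' := mul_nonneg hl0 hl'0
      have hl : l = 0 := by nlinarith
      have hl' : l' = 0 := by nlinarith
      refine ⟨ρ ⊗ₖ ρ', isDensity_kron hρ hρ', ?_⟩
      have e : ((1:ℝ)/(1+μ)) • (ρ ⊗ₖ ρ') + (μ/(1+μ) : ℝ) • (ρ ⊗ₖ ρ') = ρ ⊗ₖ ρ' := by
        rw [← heq]; norm_num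
      rw [e]
      have eA : ((1:ℝ)/(1+l)) • ρ + (l/(1+l) : ℝ) • τ = ρ := by rw [hl]; norm_num
      have eB : ((1:ℝ)/(1+l')) • ρ' + (l'/(1+l') : ℝ) • τ' = ρ' := by rw [hl']; norm_num
      rw [eA] at hσ
      rw [eB] at hσ'
      exact htensor _ hσ _ hσ'
    · -- μ > 0
      have hμne : μ ≠ 0 := ne_of_gt hpos
      refine ⟨(l/μ : ℝ) • (τ ⊗ₖ ρ') + (l'/μ : ℝ) • (ρ ⊗ₖ τ') + (l*l'/μ : ℝ) • (τ ⊗ₖ τ'),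
        ⟨?_, ?_⟩, ?_⟩
      · exact ((posSemidef_real_smul (posSemidef_kron hτ.1 hρ'.1)
            (div_nonneg hl0 hμ0)).add
          (posSemidef_real_smul (posSemidef_kron hρ.1 hτ'.1)
            (div_nonneg hl'0 hμ0))).add
          (posSemidef_real_smul (posSemidef_kron hτ.1 hτ'.1)
            (div_nonneg (mul_nonneg hl0 hl'0) hμ0))
      · have ht : (l/μ + l'/μ + l*l'/μ : ℝ) = 1 := by
          field_simp
          exact hμdef.symm
        simp only [trace_add, trace_smul, trace_kronecker, hτ.2, hτ'.2, hρ.2, hρ'.2, one_mul]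
        simp only [Complex.real_smul, mul_one]
        exact_mod_cast ht
      · have key : ((1:ℝ)/(1+μ)) • (ρ ⊗ₖ ρ') + (μ/(1+μ) : ℝ) •
            ((l/μ : ℝ) • (τ ⊗ₖ ρ') + (l'/μ : ℝ) • (ρ ⊗ₖ τ') + (l*l'/μ : ℝ) • (τ ⊗ₖ τ')) =
            (((1:ℝ)/(1+l)) • ρ + (l/(1+l) : ℝ) • τ) ⊗ₖ
            (((1:ℝ)/(1+l')) • ρ' + (l'/(1+l') : ℝ) • τ') := by
          simp only [add_kronecker, kronecker_add, smul_kronecker, kronecker_smul]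
          have hμe : μ = l + l' + l * l' := hμdef
          match_scalars <;>
            (field_simp <;> rw [hμe] <;> ring)
        rw [key]
        exact htensor _ hσ _ hσ'
  have hbdd : BddBelow (RGset FAB (ρ ⊗ₖ ρ')) := ⟨0, fun x hx => hx.1⟩
  have hle : RG FAB (ρ ⊗ₖ ρ') ≤ μ := csInf_le hbdd hμmem
  have hge : 0 ≤ RG FAB (ρ ⊗ₖ ρ') := le_csInf ⟨μ, hμmem⟩ fun x hx => hx.1
  unfold DmaxR
  calc Real.logb 2 (1 + RG FAB (ρ ⊗ₖ ρ'))
      ≤ Real.logb 2 ((1+l) * (1+l')) := by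
        apply Real.logb_le_logb_of_le (by norm_num) (by linarith)
        nlinarith
    _ = Real.logb 2 (1+l) + Real.logb 2 (1+l') := Real.logb_mul h1l.ne' h1l'.ne'
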